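/- For every real t with |t| < 3/2, the probability generating function of the ternary superpattern waiting time satisfies ∑_{n=7}^{∞} t^n·(6/3^n)·∑_{m=7}^{n} ((m−4)^2 − 2)·C(n−2, m−2) = 2t^7(16t^2 − 63t + 63) / ((3−t)^5 (3−2t)^3). -/

import Mathlib

open Finset

section Aux

private lemma pascal_step (p : ℕ → ℝ) (N : ℕ) :
    ∑ j ∈ range (N+2), p j * ((N+1).choose j : ℝ)
      = ∑ j ∈ range (N+1), (p j + p (j+1)) * (N.choose j : ℝ) := by
  rw [Finset.sum_range_succ' (fun j => p j * ((N+1).choose j : ℝ)) (N+1)]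
  simp only [Nat.choose_succ_succ, Nat.cast_add, Nat.choose_zero_right, Nat.cast_one, mul_one]
  rw [show (∑ j ∈ range (N+1), p (j+1) * (((N.choose j : ℕ) : ℝ) + (N.choose (j+1) : ℕ))) =
      (∑ j ∈ range (N+1), p (j+1) * (N.choose j : ℝ))
      + (∑ j ∈ range (N+1), p (j+1) * (N.choose (j+1) : ℝ)) by
    rw [← Finset.sum_add_distrib]; exact Finset.sum_congr rfl (fun j _ => by ring)]
  have h2 : (∑ j ∈ range (N+1), p (j+1) * (N.choose (j+1) : ℝ)) + p 0
      = ∑ j ∈ range (N+1), p j * (N.choose j : ℝ) := by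
    have := Finset.sum_range_succ' (fun j => p j * (N.choose j : ℝ)) (N+1)
    simp only [Nat.choose_zero_right, Nat.cast_one, mul_one] at this
    rw [← this, Finset.sum_range_succ, Nat.choose_succ_self]
    simp
  rw [add_assoc, h2, ← Finset.sum_add_distrib]
  exact Finset.sum_congr rfl (fun j _ => by ring)

private lemma sum_s0 (N : ℕ) : ∑ j ∈ range (N+1), (N.choose j : ℝ) = 2 ^ N := by
  rw [← Nat.cast_sum, Nat.sum_range_choose]; push_cast; ring

private lemma sum_s1 (N : ℕ) :
    ∑ j ∈ range (N+1), (j : ℝ) * (N.choose j : ℝ) = N * 2 ^ N / 2 := by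
  induction N with
  | zero => simp
  | succ N ih =>
    rw [pascal_step (fun j => (j : ℝ)) N]
    have : ∑ j ∈ range (N+1), ((j : ℝ) + ((j+1 : ℕ) : ℝ)) * (N.choose j : ℝ)
        = 2 * (∑ j ∈ range (N+1), (j : ℝ) * (N.choose j : ℝ))
          + ∑ j ∈ range (N+1), (N.choose j : ℝ) := by
      rw [Finset.mul_sum, ← Finset.sum_add_distrib]
      exact Finset.sum_congr rfl (fun j _ => by push_cast; ring)
    rw [this, ih, sum_s0]; push_cast; ring

private lemma sum_s2 (N : ℕ) : ∑ j ∈ range (N+1), (j : ℝ)^2 * (N.choose j : ℝ)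
    = N * (N+1) * 2 ^ N / 4 := by
  induction N with
  | zero => simp
  | succ N ih =>
    rw [pascal_step (fun j => (j : ℝ)^2) N]
    have : ∑ j ∈ range (N+1), ((j : ℝ)^2 + (((j+1:ℕ)) : ℝ)^2) * (N.choose j : ℝ)
        = 2 * (∑ j ∈ range (N+1), (j : ℝ)^2 * (N.choose j : ℝ))
          + 2 * (∑ j ∈ range (N+1), (j : ℝ) * (N.choose j : ℝ))
          + ∑ j ∈ range (N+1), (N.choose j : ℝ) := by
      rw [Finset.mul_sum, Finset.mul_sum, ← Finset.sum_add_distrib, ← Finset.sum_add_distrib]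
      exact Finset.sum_congr rfl (fun j _ => by push_cast; ring)
    rw [this, ih, sum_s1, sum_s0]; push_cast; ring

private lemma full_sum (N : ℕ) : ∑ j ∈ range (N+1), (((j:ℝ)-2)^2 - 2) * (N.choose j : ℝ)
    = 2 ^ N * ((N:ℝ)^2 - 7*N + 8) / 4 := by
  have : ∑ j ∈ range (N+1), (((j:ℝ)-2)^2 - 2) * (N.choose j : ℝ)
      = (∑ j ∈ range (N+1), (j : ℝ)^2 * (N.choose j : ℝ))
        - 4 * (∑ j ∈ range (N+1), (j : ℝ) * (N.choose j : ℝ))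
        + 2 * (∑ j ∈ range (N+1), (N.choose j : ℝ)) := by
    rw [Finset.mul_sum, Finset.mul_sum, ← Finset.sum_sub_distrib, ← Finset.sum_add_distrib]
    exact Finset.sum_congr rfl (fun j _ => by ring)
  rw [this, sum_s2, sum_s1, sum_s0]; ring

private lemma innerSumClosed (n : ℕ) (hn : 7 ≤ n) :
    ∑ m ∈ Finset.Icc 7 n, (((m : ℝ) - 4) ^ 2 - 2) * (Nat.choose (n - 2) (m - 2) : ℝ)
      = 2 ^ n * ((n:ℝ)^2 - 11*n + 26) / 16
        - (2 - ((n-2).choose 1 : ℝ) - 2 * ((n-2).choose 2 : ℝ)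
            - ((n-2).choose 3 : ℝ) + 2 * ((n-2).choose 4 : ℝ)) := by
  obtain ⟨N, rfl⟩ : ∃ N, n = N + 2 := ⟨n - 2, by omega⟩
  have hN : 5 ≤ N := by omega
  have h1 : ∑ m ∈ Finset.Icc 7 (N+2), (((m : ℝ) - 4) ^ 2 - 2) * ((N+2-2).choose (m - 2) : ℝ)
      = ∑ j ∈ Finset.Icc 5 N, (((j:ℝ)-2)^2 - 2) * (N.choose j : ℝ) := by
    rw [show Finset.Icc 7 (N+2) = Finset.map (addRightEmbedding 2) (Finset.Icc 5 N) by
      rw [Finset.map_add_right_Icc]]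
    rw [Finset.sum_map]
    refine Finset.sum_congr rfl (fun j hj => ?_)
    simp only [addRightEmbedding_apply]
    have : j + 2 - 2 = j := by omega
    rw [this]
    push_cast [Nat.choose_zero_right]
    ring_nf
  rw [h1]
  have h2 : ∑ j ∈ Finset.Ico (0:ℕ) 5, (((j:ℝ)-2)^2 - 2) * (N.choose j : ℝ)
      + ∑ j ∈ Finset.Ico 5 (N+1), (((j:ℝ)-2)^2 - 2) * (N.choose j : ℝ)
      = ∑ j ∈ Finset.Ico (0:ℕ) (N+1), (((j:ℝ)-2)^2 - 2) * (N.choose j : ℝ) :=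
    Finset.sum_Ico_consecutive _ (by omega) (by omega)
  have h3 : Finset.Icc 5 N = Finset.Ico 5 (N+1) := (Finset.Ico_add_one_right_eq_Icc 5 N).symm
  rw [h3, eq_sub_of_add_eq' h2]
  rw [← Finset.range_eq_Ico, full_sum]
  rw [← Finset.range_eq_Ico, Finset.sum_range_succ, Finset.sum_range_succ, Finset.sum_range_succ,
    Finset.sum_range_succ, Finset.sum_range_succ, Finset.sum_range_zero]
  have e2 : N + 2 - 2 = N := by omega
  rw [e2]
  push_cast [Nat.choose_zero_right]
  ring

private lemma basisHasSum (k : ℕ) {r : ℝ} (hr : |r| < 1) :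
    HasSum (fun n : ℕ => ((n - 2).choose k : ℝ) * r ^ n)
      (r ^ (k+2) / (1-r) ^ (k+1) + ((0:ℕ).choose k : ℝ) * (1 + r)) := by
  have hr' : ‖r‖ < 1 := by rwa [Real.norm_eq_abs]
  have h0 := hasSum_choose_mul_geometric_of_norm_lt_one (𝕜 := ℝ) k hr'
  have h1 : HasSum (fun n : ℕ => ((n - 2).choose k : ℝ) * r ^ n)
      (r ^ (k+2) * (1 / (1-r) ^ (k+1))
        + ∑ i ∈ range (k+2), ((i - 2).choose k : ℝ) * r ^ i) := by
    rw [← hasSum_nat_add_iff (k+2)]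
    have : ∀ n : ℕ, ((n + (k+2) - 2).choose k : ℝ) * r ^ (n + (k+2))
        = r ^ (k+2) * (((n + k).choose k : ℝ) * r ^ n) := by
      intro n
      have : n + (k+2) - 2 = n + k := by omega
      rw [this, pow_add]; ring
    simpa [this] using h0.mul_left (r ^ (k+2))
  convert h1 using 2
  · rw [div_eq_mul_inv, one_div]
  · rcases Nat.eq_zero_or_pos k with hk | hk
    · subst hk
      simp [Finset.sum_range_succ]
    · rw [Finset.sum_eq_zero, Nat.choose_eq_zero_of_lt hk]
      · simp
      · intro i hi
        simp only [Finset.mem_range] at hi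
        rw [Nat.choose_eq_zero_of_lt (by omega)]
        simp

end Aux

set_option maxHeartbeats 2000000 in
/-- For `|t| < 3/2`, the probability generating function of the ternary
superpattern waiting time equals `2t⁷(16t² − 63t + 63)/((3−t)⁵(3−2t)³)`. -/
theorem superpattern_waiting_time_generating_function (t : ℝ) (ht : |t| < 3 / 2) :
    ∑' n : ℕ,
      (if 7 ≤ n then
        t ^ n * ((6 / 3 ^ n : ℝ) *
          ∑ m ∈ Finset.Icc 7 n, (((m : ℝ) - 4) ^ 2 - 2) * (Nat.choose (n - 2) (m - 2) : ℝ))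
      else 0) =
    2 * t ^ 7 * (16 * t ^ 2 - 63 * t + 63) / ((3 - t) ^ 5 * (3 - 2 * t) ^ 3) := by
  rw [abs_lt] at ht
  have hx : |t/3| < 1 := by rw [abs_lt]; constructor <;> [linarith; linarith]
  have hu : |2*t/3| < 1 := by rw [abs_lt]; constructor <;> [linarith; linarith]
  set g : ℕ → ℝ := fun n =>
    (3/4) * (((n-2).choose 2 : ℝ) * (2*t/3)^n)
      - (9/4) * (((n-2).choose 1 : ℝ) * (2*t/3)^n)
      + 3 * (((n-2).choose 0 : ℝ) * (2*t/3)^n)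
      - 12 * (((n-2).choose 0 : ℝ) * (t/3)^n)
      + 6 * (((n-2).choose 1 : ℝ) * (t/3)^n)
      + 12 * (((n-2).choose 2 : ℝ) * (t/3)^n)
      + 6 * (((n-2).choose 3 : ℝ) * (t/3)^n)
      - 12 * (((n-2).choose 4 : ℝ) * (t/3)^n) with hgdef
  have hg : HasSum g
      ((3/4) * ((2*t/3)^(2+2)/(1-2*t/3)^(2+1) + ((0:ℕ).choose 2 : ℝ) * (1+2*t/3))
        - (9/4) * ((2*t/3)^(1+2)/(1-2*t/3)^(1+1) + ((0:ℕ).choose 1 : ℝ) * (1+2*t/3))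
        + 3 * ((2*t/3)^(0+2)/(1-2*t/3)^(0+1) + ((0:ℕ).choose 0 : ℝ) * (1+2*t/3))
        - 12 * ((t/3)^(0+2)/(1-t/3)^(0+1) + ((0:ℕ).choose 0 : ℝ) * (1+t/3))
        + 6 * ((t/3)^(1+2)/(1-t/3)^(1+1) + ((0:ℕ).choose 1 : ℝ) * (1+t/3))
        + 12 * ((t/3)^(2+2)/(1-t/3)^(2+1) + ((0:ℕ).choose 2 : ℝ) * (1+t/3))
        + 6 * ((t/3)^(3+2)/(1-t/3)^(3+1) + ((0:ℕ).choose 3 : ℝ) * (1+t/3))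
        - 12 * ((t/3)^(4+2)/(1-t/3)^(4+1) + ((0:ℕ).choose 4 : ℝ) * (1+t/3))) :=
    (((((((((basisHasSum 2 hu).mul_left (3/4)).sub
      ((basisHasSum 1 hu).mul_left (9/4))).add
      ((basisHasSum 0 hu).mul_left 3)).sub
      ((basisHasSum 0 hx).mul_left 12)).add
      ((basisHasSum 1 hx).mul_left 6)).add
      ((basisHasSum 2 hx).mul_left 12)).add
      ((basisHasSum 3 hx).mul_left 6)).sub
      ((basisHasSum 4 hx).mul_left 12))
  have he : HasSum (fun n => if n < 7 then g n else 0) (∑ n ∈ range 7, g n) := by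
    have h := hasSum_sum_of_ne_finset_zero
      (L := SummationFilter.unconditional ℕ) (s := range 7) (f := fun n => if n < 7 then g n else 0)
      (by intro n hn; simp only [Finset.mem_range] at hn; simp [if_neg, hn])
    have : ∑ n ∈ range 7, (if n < 7 then g n else 0) = ∑ n ∈ range 7, g n :=
      Finset.sum_congr rfl (fun n hn => by simp only [Finset.mem_range] at hn; simp [hn])
    rwa [this] at h
  have point : ∀ n : ℕ, 7 ≤ n →
      t ^ n * ((6 / 3 ^ n : ℝ) *
        ∑ m ∈ Finset.Icc 7 n, (((m : ℝ) - 4) ^ 2 - 2) * (Nat.choose (n - 2) (m - 2) : ℝ))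
      = g n := by
    intro n hn
    rw [innerSumClosed n hn, hgdef]
    have h1 : ((n-2).choose 1 : ℝ) = (n:ℝ) - 2 := by
      rw [Nat.choose_one_right, Nat.cast_sub (by omega)]; norm_num
    have h2 : ((n-2).choose 2 : ℝ) = ((n:ℝ)-2) * ((n:ℝ)-3) / 2 := by
      rw [Nat.cast_choose_two, Nat.cast_sub (by omega)]; ring
    simp only [h1, h2, Nat.choose_zero_right, Nat.cast_one]
    have e1 : (2*t/3)^n = 2^n * t^n / 3^n := by
      rw [div_pow, mul_pow]
    have e2 : (t/3)^n = t^n / 3^n := by rw [div_pow]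
    rw [e1, e2]
    have h3 : (3:ℝ)^n ≠ 0 := by positivity
    field_simp
    ring
  have hfun : ∀ n : ℕ,
      (if 7 ≤ n then
        t ^ n * ((6 / 3 ^ n : ℝ) *
          ∑ m ∈ Finset.Icc 7 n, (((m : ℝ) - 4) ^ 2 - 2) * (Nat.choose (n - 2) (m - 2) : ℝ))
      else 0) = g n - (if n < 7 then g n else 0) := by
    intro n
    by_cases hn : 7 ≤ n
    · rw [if_pos hn, if_neg (by omega), point n hn, sub_zero]
    · rw [if_neg hn, if_pos (by omega), sub_self]
  rw [tsum_congr hfun, (hg.sub he).tsum_eq]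
  have d1 : (3:ℝ) - t ≠ 0 := by intro h; rw [sub_eq_zero] at h; linarith [ht.2]
  have d2 : (3:ℝ) - 2*t ≠ 0 := by intro h; rw [sub_eq_zero] at h; linarith [ht.2]
  have d3 : (1:ℝ) - t/3 ≠ 0 := by intro h; rw [sub_eq_zero] at h; linarith [ht.2]
  have d4 : (1:ℝ) - 2*t/3 ≠ 0 := by intro h; rw [sub_eq_zero] at h; linarith [ht.2]
  rw [Finset.sum_range_succ, Finset.sum_range_succ, Finset.sum_range_succ,
    Finset.sum_range_succ, Finset.sum_range_succ, Finset.sum_range_succ,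
    Finset.sum_range_succ, Finset.sum_range_zero, hgdef]
  norm_num [Nat.choose]
  field_simp
  ring
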